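/- Let p be a prime. Then p divides the denominator of the Bernoulli number B_{p-1} (written in lowest terms). -/

import Mathlib

open Finset

/-- Key Faulhaber-derived identity. -/
lemma vsc_bern_identity (p m : ℕ) :
    bernoulli m * p +
      ∑ i ∈ range m, bernoulli i * (m.choose i) *
        ((p : ℚ) ^ (m + 1 - i) / ((m + 1 - i : ℕ) : ℚ)) =
      ∑ k ∈ range p, (k : ℚ) ^ m := by
  rw [sum_range_pow p m, Finset.sum_range_succ]
  have hterm : ∀ i, i < m + 1 →
      bernoulli i * ((m + 1).choose i) * (p : ℚ) ^ (m + 1 - i) / (m + 1) =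
      bernoulli i * (m.choose i) * ((p : ℚ) ^ (m + 1 - i) / ((m + 1 - i : ℕ) : ℚ)) := by
    intro i hi
    have h1 : ((m + 1 - i : ℕ) : ℚ) ≠ 0 := by
      have : 0 < m + 1 - i := by omega
      exact_mod_cast this.ne'
    have h2 : ((m : ℚ) + 1) ≠ 0 := by positivity
    have hc : ((m + 1).choose i : ℚ) / ((m : ℚ) + 1) = (m.choose i : ℚ) / ((m + 1 - i : ℕ) : ℚ) := by
      rw [div_eq_div_iff h2 h1]
      exact_mod_cast (Nat.choose_mul_succ_eq m i).symm
    field_simp at hc ⊢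
    linear_combination (bernoulli i * (p:ℚ) ^ (m + 1 - i)) * hc
  have hlast : bernoulli m * ((m + 1).choose m) * (p : ℚ) ^ (m + 1 - m) / (m + 1) =
      bernoulli m * p := by
    have : m + 1 - m = 1 := by omega
    rw [this, Nat.choose_succ_self_right]
    have h2 : ((m : ℚ) + 1) ≠ 0 := by positivity
    field_simp
    push_cast
    ring
  rw [hlast, add_comm]
  congr 1
  exact Finset.sum_congr rfl (fun i hi => (hterm i (by exact lt_trans (mem_range.mp hi) (Nat.lt_succ_self m))).symm)

lemma vsc_norm_pow_div_le (p : ℕ) [hp : Fact p.Prime] {j : ℕ} (hj : 1 ≤ j) :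
    padicNorm p ((p : ℚ) ^ j / (j : ℚ)) ≤ (p : ℚ)⁻¹ := by
  have hp1 : 1 < p := hp.out.one_lt
  have hpQ : (1 : ℚ) < p := by exact_mod_cast hp1
  have hv : padicValNat p j < j := by
    have h1 : p ^ padicValNat p j ≤ j := Nat.le_of_dvd (by omega) pow_padicValNat_dvd
    have h2 : j < p ^ j := Nat.lt_pow_self hp1
    exact (Nat.pow_lt_pow_iff_right hp1).mp (lt_of_le_of_lt h1 h2)
  have hjQ : (j : ℚ) ≠ 0 := by exact_mod_cast (by omega : j ≠ 0)
  have hpQ0 : (p : ℚ) ≠ 0 := by positivity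
  have hx : (p : ℚ) ^ j / (j : ℚ) ≠ 0 := div_ne_zero (pow_ne_zero _ hpQ0) hjQ
  rw [padicNorm.eq_zpow_of_nonzero hx]
  have hval : padicValRat p ((p : ℚ) ^ j / (j : ℚ)) = (j : ℤ) - padicValNat p j := by
    rw [padicValRat.div (p := p) (pow_ne_zero _ hpQ0) hjQ,
      padicValRat.pow (p := p) _, padicValRat.self hp1, padicValRat.of_nat, mul_one]
  rw [hval]
  calc (p:ℚ) ^ (-((j : ℤ) - padicValNat p j)) ≤ (p:ℚ) ^ (-1 : ℤ) := by
        apply zpow_le_zpow_right₀ hpQ.le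
        omega
    _ = (p:ℚ)⁻¹ := zpow_neg_one _

lemma vsc_norm_pow_div_eq (p : ℕ) [hp : Fact p.Prime] {j : ℕ} (hj : 1 ≤ j) (hjp : j < p) :
    padicNorm p ((p : ℚ) ^ j / (j : ℚ)) = (p : ℚ) ^ (-(j : ℤ)) := by
  have hp1 : 1 < p := hp.out.one_lt
  have hjQ : (j : ℚ) ≠ 0 := by exact_mod_cast (by omega : j ≠ 0)
  have hpQ0 : (p : ℚ) ≠ 0 := by positivity
  have hx : (p : ℚ) ^ j / (j : ℚ) ≠ 0 := div_ne_zero (pow_ne_zero _ hpQ0) hjQ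
  have hv : padicValNat p j = 0 := by
    apply padicValNat.eq_zero_of_not_dvd
    intro h
    exact absurd (Nat.le_of_dvd (by omega) h) (by omega)
  rw [padicNorm.eq_zpow_of_nonzero hx]
  rw [padicValRat.div (p := p) (pow_ne_zero _ hpQ0) hjQ,
    padicValRat.pow (p := p) _, padicValRat.self hp1, padicValRat.of_nat, mul_one, hv]
  norm_num

lemma vsc_norm_bernoulli_le (p : ℕ) [hp : Fact p.Prime] (m : ℕ) :
    padicNorm p (bernoulli m) ≤ p := by
  induction m using Nat.strong_induction_on with
  | _ m ih =>
  have hp1 : 1 < p := hp.out.one_lt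
  have hpQ : (1 : ℚ) < p := by exact_mod_cast hp1
  have hpQ0 : (0 : ℚ) < p := by positivity
  have key : bernoulli m * p =
      (∑ k ∈ range p, (k : ℚ) ^ m) -
        ∑ i ∈ range m, bernoulli i * (m.choose i) *
          ((p : ℚ) ^ (m + 1 - i) / ((m + 1 - i : ℕ) : ℚ)) :=
    eq_sub_of_add_eq (vsc_bern_identity p m)
  have h1 : padicNorm p (bernoulli m * p) ≤ 1 := by
    rw [key]
    refine le_trans padicNorm.sub (max_le ?_ ?_)
    · refine padicNorm.sum_le' (fun k _ => ?_) zero_le_one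
      have : ((k : ℚ) ^ m) = ((k ^ m : ℕ) : ℚ) := by push_cast; ring
      rw [this]
      exact padicNorm.of_nat _
    · refine padicNorm.sum_le' (fun i hi => ?_) zero_le_one
      have him : i < m := mem_range.mp hi
      rw [padicNorm.mul, padicNorm.mul]
      calc padicNorm p (bernoulli i) * padicNorm p ((m.choose i : ℚ)) *
            padicNorm p ((p : ℚ) ^ (m + 1 - i) / ((m + 1 - i : ℕ) : ℚ))
          ≤ (p : ℚ) * 1 * (p : ℚ)⁻¹ := by
            apply mul_le_mul
            apply mul_le_mul (ih i him) (padicNorm.of_nat _) (padicNorm.nonneg _) (by positivity)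
            exact vsc_norm_pow_div_le p (by omega)
            exact padicNorm.nonneg _
            positivity
        _ = 1 := by field_simp
  rw [padicNorm.mul, padicNorm.padicNorm_p_of_prime] at h1
  calc padicNorm p (bernoulli m) = padicNorm p (bernoulli m) * (p:ℚ)⁻¹ * p := by field_simp
    _ ≤ 1 * p := by apply mul_le_mul_of_nonneg_right h1 (le_of_lt hpQ0)
    _ = p := one_mul _

lemma vsc_fermat_sum (p : ℕ) [hp : Fact p.Prime] :
    p ∣ (∑ k ∈ range p, k ^ (p - 1)) + 1 := by
  have hp1 : 1 < p := hp.out.one_lt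
  haveI : NeZero p := ⟨by omega⟩
  rw [← ZMod.natCast_eq_zero_iff]
  push_cast
  have hsum : (∑ k ∈ range p, (k : ZMod p) ^ (p - 1)) = (p - 1 : ℕ) := by
    rw [range_eq_Ico, Finset.sum_eq_sum_Ico_succ_bot (by omega : 0 < p)]
    have h0 : ((0 : ℕ) : ZMod p) ^ (p - 1) = 0 := by
      rw [Nat.cast_zero, zero_pow (by omega : p - 1 ≠ 0)]
    rw [h0, zero_add]
    have : ∀ k ∈ Finset.Ico 1 p, ((k : ZMod p)) ^ (p - 1) = 1 := by
      intro k hk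
      rw [Finset.mem_Ico] at hk
      apply ZMod.pow_card_sub_one_eq_one
      intro h
      rw [ZMod.natCast_eq_zero_iff] at h
      exact absurd (Nat.le_of_dvd (by omega) h) (by omega)
    rw [Finset.sum_congr rfl this, Finset.sum_const, Nat.card_Ico]
    simp
  rw [hsum]
  have : ((p - 1 : ℕ) : ZMod p) + 1 = ((p - 1 + 1 : ℕ) : ZMod p) := by push_cast; ring
  rw [this, (by omega : p - 1 + 1 = p), ZMod.natCast_self]

lemma vsc_norm_bernoulli_pred (p : ℕ) [hp : Fact p.Prime] :
    padicNorm p (bernoulli (p - 1)) = p := by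
  have hp1 : 1 < p := hp.out.one_lt
  have hpQ : (1 : ℚ) < p := by exact_mod_cast hp1
  have hpQ0 : (0 : ℚ) < p := by positivity
  set m := p - 1 with hm
  have hmp : m + 1 = p := by omega
  have key : bernoulli m * p + 1 =
      ((∑ k ∈ range p, (k : ℚ) ^ m) + 1) -
        ∑ i ∈ range m, bernoulli i * (m.choose i) *
          ((p : ℚ) ^ (m + 1 - i) / ((m + 1 - i : ℕ) : ℚ)) := by
    have := vsc_bern_identity p m
    linarith
  -- norm of (S + 1) ≤ p⁻¹
  have hS : padicNorm p ((∑ k ∈ range p, (k : ℚ) ^ m) + 1) ≤ (p : ℚ)⁻¹ := by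
    have hcast : (∑ k ∈ range p, (k : ℚ) ^ m) + 1 =
        (((∑ k ∈ range p, k ^ m) + 1 : ℕ) : ℚ) := by push_cast; ring
    rw [hcast]
    have hdvd : (p : ℤ) ^ 1 ∣ (((∑ k ∈ range p, k ^ m) + 1 : ℕ) : ℤ) := by
      rw [pow_one]
      exact_mod_cast vsc_fermat_sum p
    have := (padicNorm.dvd_iff_norm_le (p := p) (n := 1)
      (z := (((∑ k ∈ range p, k ^ m) + 1 : ℕ) : ℤ))).mp (by exact_mod_cast hdvd)
    simpa using this
  -- norm of the correction sum ≤ p⁻¹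
  have hT : padicNorm p (∑ i ∈ range m, bernoulli i * (m.choose i) *
      ((p : ℚ) ^ (m + 1 - i) / ((m + 1 - i : ℕ) : ℚ))) ≤ (p : ℚ)⁻¹ := by
    refine padicNorm.sum_le' (fun i hi => ?_) (by positivity)
    have him : i < m := mem_range.mp hi
    rw [padicNorm.mul, padicNorm.mul]
    rcases Nat.eq_zero_or_pos i with rfl | hipos
    · -- i = 0 : bernoulli 0 = 1, choose = 1, term norm = norm (p^p / p) ≤ p⁻¹
      simp only [bernoulli_zero, padicNorm.one, Nat.choose_zero_right, Nat.cast_one, one_mul,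
        Nat.sub_zero]
      exact vsc_norm_pow_div_le p (by omega)
    · -- 1 ≤ i < m : j = m + 1 - i satisfies 2 ≤ j < p
      have hj1 : 1 ≤ m + 1 - i := by omega
      have hj2 : 2 ≤ m + 1 - i := by omega
      have hjp : m + 1 - i < p := by omega
      calc padicNorm p (bernoulli i) * padicNorm p ((m.choose i : ℚ)) *
            padicNorm p ((p : ℚ) ^ (m + 1 - i) / ((m + 1 - i : ℕ) : ℚ))
          ≤ (p : ℚ) * 1 * (p : ℚ) ^ (-((m + 1 - i : ℕ) : ℤ)) := by
            apply mul_le_mul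
            apply mul_le_mul (vsc_norm_bernoulli_le p i) (padicNorm.of_nat _)
              (padicNorm.nonneg _) (by positivity)
            exact le_of_eq (vsc_norm_pow_div_eq p hj1 hjp)
            exact padicNorm.nonneg _
            positivity
        _ ≤ (p : ℚ)⁻¹ := by
            rw [mul_one]
            have hh : (p:ℚ) * (p:ℚ) ^ (-((m + 1 - i : ℕ) : ℤ)) =
                (p:ℚ) ^ (1 + -((m + 1 - i : ℕ) : ℤ)) := by
              rw [zpow_add₀ (ne_of_gt hpQ0), zpow_one]
            rw [hh, ← zpow_neg_one]
            apply zpow_le_zpow_right₀ hpQ.le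
            omega
  have hlt : padicNorm p (bernoulli m * p + 1) < 1 := by
    rw [key]
    calc padicNorm p _ ≤ max (padicNorm p ((∑ k ∈ range p, (k : ℚ) ^ m) + 1))
          (padicNorm p (∑ i ∈ range m, bernoulli i * (m.choose i) *
            ((p : ℚ) ^ (m + 1 - i) / ((m + 1 - i : ℕ) : ℚ)))) := padicNorm.sub
      _ ≤ (p : ℚ)⁻¹ := max_le hS hT
      _ < 1 := by rw [inv_lt_one_iff₀]; right; exact hpQ
  -- ultrametric : norm (bernoulli m * p) = 1
  have hne : padicNorm p (bernoulli m * p + 1) ≠ padicNorm p (-1) := by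
    rw [padicNorm.neg, padicNorm.one]; exact ne_of_lt hlt
  have heq : padicNorm p (bernoulli m * p) = 1 := by
    have : bernoulli m * p = (bernoulli m * p + 1) + (-1) := by ring
    rw [this, padicNorm.add_eq_max_of_ne hne, padicNorm.neg, padicNorm.one,
      max_eq_right (le_of_lt hlt)]
  rw [padicNorm.mul, padicNorm.padicNorm_p_of_prime] at heq
  rwa [mul_inv_eq_one₀ (ne_of_gt hpQ0)] at heq

/-- Von Staudt–Clausen (part): for a prime `p`, `p` divides the denominator of the
Bernoulli number `B_{p-1}` (in lowest terms). -/
theorem prime_dvd_den_bernoulli (p : ℕ) (hp : p.Prime) :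
    p ∣ (bernoulli (p - 1)).den := by
  haveI : Fact p.Prime := ⟨hp⟩
  have hp1 : 1 < p := hp.one_lt
  have hpQ : (1 : ℚ) < p := by exact_mod_cast hp1
  have h := vsc_norm_bernoulli_pred p
  have hq0 : bernoulli (p - 1) ≠ 0 := by
    intro h0
    rw [h0, padicNorm.zero] at h
    linarith
  rw [padicNorm.eq_zpow_of_nonzero hq0] at h
  have hval : padicValRat p (bernoulli (p - 1)) = -1 := by
    have : (p : ℚ) ^ (-padicValRat p (bernoulli (p - 1))) = (p : ℚ) ^ (1 : ℤ) := by
      rw [h, zpow_one]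
    have := zpow_right_injective₀ (by positivity) (ne_of_gt hpQ) this
    omega
  rw [padicValRat] at hval
  have hd : 1 ≤ padicValNat p (bernoulli (p - 1)).den := by omega
  exact dvd_trans (dvd_pow_self p (by omega : padicValNat p (bernoulli (p - 1)).den ≠ 0))
    pow_padicValNat_dvd
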